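/- Let X : Ω → ℝⁿ and ε : Ω → ℝⁿ be square-integrable random vectors on a probability space, with X and ε independent and E[ε] = 0. Let Γ_X = E[X Xᵀ] and Γ_ε = E[ε εᵀ]. Then the Wiener smoothing matrix Â = Γ_X (Γ_X + Γ_ε)† attains the global minimum of the denoising Bayes risk: for every A ∈ ℝ^{n×n}, E‖Â (X + ε) − X‖₂² ≤ E‖A (X + ε) − X‖₂². -/

import Mathlib

open Matrix MeasureTheory

/-- Second (cross-)moment matrix `E[X Yᵀ]` of two random vectors. -/
noncomputable def secondMoment {Ω : Type} [MeasurableSpace Ω] (μ : Measure Ω)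
    {n m : ℕ} (X : Ω → Fin n → ℝ) (Y : Ω → Fin m → ℝ) : Matrix (Fin n) (Fin m) ℝ :=
  Matrix.of fun i j => ∫ ω, X ω i * Y ω j ∂μ

/-- `Ad` is the Moore–Penrose pseudoinverse of `A` (the four Penrose conditions). -/
def IsMoorePenrose {m n : ℕ} (A : Matrix (Fin m) (Fin n) ℝ)
    (Ad : Matrix (Fin n) (Fin m) ℝ) : Prop :=
  A * Ad * A = A ∧ Ad * A * Ad = Ad ∧ (A * Ad)ᵀ = A * Ad ∧ (Ad * A)ᵀ = Ad * A


section Aux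
variable {Ω : Type} [MeasurableSpace Ω] {μ : Measure Ω}

lemma aux_mul_integrable {f g : Ω → ℝ} (hf : MemLp f 2 μ) (hg : MemLp g 2 μ) :
    Integrable (fun ω => f ω * g ω) μ := by
  have h : MemLp (f • g) 1 μ := hg.smul hf
  exact memLp_one_iff_integrable.mp h

lemma aux_proj {n : ℕ} {X : Ω → Fin n → ℝ} (hX : MemLp X 2 μ) (i : Fin n) :
    MemLp (fun ω => X ω i) 2 μ :=
  (ContinuousLinearMap.proj (R := ℝ) (φ := fun _ : Fin n => ℝ) i).comp_memLp' hX

lemma aux_psd {n : ℕ} {X : Ω → Fin n → ℝ} (hX : MemLp X 2 μ) :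
    (secondMoment μ X X).PosSemidef := by
  refine PosSemidef.of_dotProduct_mulVec_nonneg ?_ ?_
  · ext i j
    simp only [conjTranspose_apply, secondMoment, of_apply, star_trivial]
    simp_rw [mul_comm]
  · intro x
    have hint : ∀ i j : Fin n, Integrable (fun ω => X ω i * X ω j) μ :=
      fun i j => aux_mul_integrable (aux_proj hX i) (aux_proj hX j)
    have key : star x ⬝ᵥ (secondMoment μ X X) *ᵥ x
        = ∫ ω, (∑ i, x i * X ω i) ^ 2 ∂μ := by
      have expand : ∀ ω : Ω, (∑ i, x i * X ω i) ^ 2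
          = ∑ i, ∑ j, x i * (x j * (X ω i * X ω j)) := by
        intro ω
        rw [sq, Finset.sum_mul_sum]
        exact Finset.sum_congr rfl fun i _ => Finset.sum_congr rfl fun j _ => by ring
      simp_rw [expand]
      rw [integral_finset_sum _ (fun i _ => integrable_finset_sum _
        (fun j _ => ((hint i j).const_mul (x j)).const_mul (x i)))]
      simp_rw [integral_finset_sum _ (fun j (_ : j ∈ Finset.univ) =>
        ((hint _ j).const_mul (x j)).const_mul (x _)), integral_const_mul]
      simp only [star_trivial, dotProduct, mulVec, secondMoment, of_apply]
      refine Finset.sum_congr rfl fun i _ => ?_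
      rw [Finset.mul_sum]
      exact Finset.sum_congr rfl fun j _ => by ring
    rw [key]
    exact integral_nonneg fun ω => sq_nonneg _

end Aux

lemma aux_wiener_matrix {n : ℕ} {Γ Eps Gd : Matrix (Fin n) (Fin n) ℝ}
    (hΓ : Γ.PosSemidef) (hE : Eps.PosSemidef)
    (h1 : (Γ + Eps) * Gd * (Γ + Eps) = Γ + Eps)
    (h4 : (Gd * (Γ + Eps))ᵀ = Gd * (Γ + Eps)) :
    Γ * Gd * (Γ + Eps) = Γ := by
  classical
  set G := Γ + Eps with hG
  have hQ : ∀ v : Fin n → ℝ, Γ *ᵥ ((1 - Gd * G) *ᵥ v) = 0 := by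
    intro v
    set w := (1 - Gd * G) *ᵥ v with hw
    have hGQ : G * (1 - Gd * G) = 0 := by
      rw [Matrix.mul_sub, Matrix.mul_one, ← Matrix.mul_assoc, h1, sub_self]
    have hGw : G *ᵥ w = 0 := by
      rw [hw, Matrix.mulVec_mulVec, hGQ, Matrix.zero_mulVec]
    have hq : star w ⬝ᵥ Γ *ᵥ w = 0 := by
      have hsum : (star w ⬝ᵥ Γ *ᵥ w) + (star w ⬝ᵥ Eps *ᵥ w) = 0 := by
        rw [← dotProduct_add, ← Matrix.add_mulVec, ← hG, hGw, dotProduct_zero]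
      have t1 := hΓ.dotProduct_mulVec_nonneg w
      have t2 := hE.dotProduct_mulVec_nonneg w
      linarith
    exact (hΓ.dotProduct_mulVec_zero_iff w).mp hq
  have hΓQ : Γ * (1 - Gd * G) = 0 := by
    ext i j
    have h7 := congrFun (hQ (Pi.single j 1)) i
    rw [Matrix.mulVec_mulVec] at h7
    simpa using h7
  have h5 : Γ * (Gd * G) = Γ := by
    have h6 := hΓQ
    rw [Matrix.mul_sub, Matrix.mul_one, sub_eq_zero] at h6
    exact h6.symm
  rw [Matrix.mul_assoc]
  exact h5

/-- The Wiener smoothing matrix `Â = Γ_X (Γ_X + Γ_ε)†` attains the global minimum of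
the denoising Bayes risk `E‖A (X + ε) − X‖₂²` over all `A`. -/
theorem wiener_filter_optimal {Ω : Type} [MeasurableSpace Ω]
    (μ : Measure Ω) [IsProbabilityMeasure μ] {n : ℕ}
    (X : Ω → Fin n → ℝ) (ε : Ω → Fin n → ℝ)
    (hX : MemLp X 2 μ) (hε : MemLp ε 2 μ)
    (hindep : ProbabilityTheory.IndepFun X ε μ)
    (hmean : (∫ ω, ε ω ∂μ) = 0)
    (Gd : Matrix (Fin n) (Fin n) ℝ)
    (hGd : IsMoorePenrose (secondMoment μ X X + secondMoment μ ε ε) Gd) :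
    ∀ A : Matrix (Fin n) (Fin n) ℝ,
      ∫ ω, ∑ i, ((secondMoment μ X X * Gd) *ᵥ (X ω + ε ω) - X ω) i ^ 2 ∂μ
        ≤ ∫ ω, ∑ i, (A *ᵥ (X ω + ε ω) - X ω) i ^ 2 ∂μ := by
  classical
  intro A
  set Γ := secondMoment μ X X with hΓdef
  set Eps := secondMoment μ ε ε with hEdef
  set Ah := Γ * Gd with hAhdef
  set B := A - Ah with hBdef
  set Y : Ω → Fin n → ℝ := fun ω => X ω + ε ω with hYdef
  -- component membership in L²
  have memX : ∀ i, MemLp (fun ω => X ω i) 2 μ := aux_proj hX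
  have memE : ∀ i, MemLp (fun ω => ε ω i) 2 μ := aux_proj hε
  have memY : ∀ i, MemLp (fun ω => Y ω i) 2 μ := fun i => (memX i).add (memE i)
  have memMv : ∀ (M : Matrix (Fin n) (Fin n) ℝ) (i : Fin n),
      MemLp (fun ω => (M *ᵥ Y ω) i) 2 μ := by
    intro M i
    have h : (fun ω => (M *ᵥ Y ω) i) = fun ω => ∑ j, M i j * Y ω j := by
      funext ω; simp [Matrix.mulVec, dotProduct]
    have hs : MemLp (∑ j : Fin n, fun ω => M i j * Y ω j) 2 μ :=
      memLp_finset_sum' _ fun j _ => (memY j).const_mul (M i j)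
    have he : (∑ j : Fin n, fun ω => M i j * Y ω j) = fun ω => ∑ j, M i j * Y ω j := by
      funext ω; simp
    rw [h, ← he]
    exact hs
  have memR : ∀ (M : Matrix (Fin n) (Fin n) ℝ) (i : Fin n),
      MemLp (fun ω => (M *ᵥ Y ω) i - X ω i) 2 μ :=
    fun M i => (memMv M i).sub (memX i)
  have intYY : ∀ j k, Integrable (fun ω => Y ω j * Y ω k) μ :=
    fun j k => aux_mul_integrable (memY j) (memY k)
  have intYX : ∀ j i, Integrable (fun ω => Y ω j * X ω i) μ :=
    fun j i => aux_mul_integrable (memY j) (memX i)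
  -- mean-zero noise, componentwise
  have hε0 : ∀ k, ∫ ω, ε ω k ∂μ = 0 := by
    intro k
    have h1 : Integrable ε μ := hε.integrable one_le_two
    have h2 := (ContinuousLinearMap.proj (R := ℝ) (φ := fun _ : Fin n => ℝ) k).integral_comp_comm h1
    simpa [hmean] using h2
  have hXε : ∀ j k, ∫ ω, X ω j * ε ω k ∂μ = 0 := by
    intro j k
    have hi : ProbabilityTheory.IndepFun (fun ω => X ω j) (fun ω => ε ω k) μ :=
      hindep.comp (measurable_pi_apply j) (measurable_pi_apply k)
    have h8 : ∫ ω, X ω j * ε ω k ∂μ = (∫ ω, X ω j ∂μ) * ∫ ω, ε ω k ∂μ :=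
      hi.integral_mul_eq_mul_integral (memX j).aestronglyMeasurable
        (memE k).aestronglyMeasurable
    rw [h8, hε0 k, mul_zero]
  have hεX : ∀ j k, ∫ ω, ε ω j * X ω k ∂μ = 0 := by
    intro j k
    have h : ∀ ω, ε ω j * X ω k = X ω k * ε ω j := fun ω => mul_comm _ _
    simp_rw [h]
    exact hXε k j
  -- second moments of Y
  have hYY : ∀ j k, ∫ ω, Y ω j * Y ω k ∂μ = Γ j k + Eps j k := by
    intro j k
    have expand : ∀ ω, Y ω j * Y ω k
        = X ω j * X ω k + (X ω j * ε ω k + (ε ω j * X ω k + ε ω j * ε ω k)) := by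
      intro ω
      show (X ω j + ε ω j) * (X ω k + ε ω k) = _
      ring
    simp_rw [expand]
    have I1 := aux_mul_integrable (memX j) (memX k)
    have I2 := aux_mul_integrable (memX j) (memE k)
    have I3 := aux_mul_integrable (memE j) (memX k)
    have I4 := aux_mul_integrable (memE j) (memE k)
    have e1 : ∫ ω, (X ω j * X ω k + (X ω j * ε ω k + (ε ω j * X ω k + ε ω j * ε ω k))) ∂μ
        = (∫ ω, X ω j * X ω k ∂μ)
          + ∫ ω, (X ω j * ε ω k + (ε ω j * X ω k + ε ω j * ε ω k)) ∂μ :=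
      integral_add I1 (I2.add (I3.add I4))
    have e2 : ∫ ω, (X ω j * ε ω k + (ε ω j * X ω k + ε ω j * ε ω k)) ∂μ
        = (∫ ω, X ω j * ε ω k ∂μ) + ∫ ω, (ε ω j * X ω k + ε ω j * ε ω k) ∂μ :=
      integral_add I2 (I3.add I4)
    have e3 : ∫ ω, (ε ω j * X ω k + ε ω j * ε ω k) ∂μ
        = (∫ ω, ε ω j * X ω k ∂μ) + ∫ ω, ε ω j * ε ω k ∂μ :=
      integral_add I3 I4
    rw [e1, e2, e3, hXε j k, hεX j k]
    simp [hΓdef, hEdef, secondMoment]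
  have hYX : ∀ j i, ∫ ω, Y ω j * X ω i ∂μ = Γ j i := by
    intro j i
    have expand : ∀ ω, Y ω j * X ω i = X ω j * X ω i + ε ω j * X ω i := by
      intro ω
      show (X ω j + ε ω j) * X ω i = _
      ring
    simp_rw [expand]
    have e1 : ∫ ω, (X ω j * X ω i + ε ω j * X ω i) ∂μ
        = (∫ ω, X ω j * X ω i ∂μ) + ∫ ω, ε ω j * X ω i ∂μ :=
      integral_add (aux_mul_integrable (memX j) (memX i)) (aux_mul_integrable (memE j) (memX i))
    rw [e1, hεX j i, add_zero]
    simp [hΓdef, secondMoment]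
  -- linear algebra
  have hpsdΓ : Γ.PosSemidef := aux_psd hX
  have hpsdE : Eps.PosSemidef := aux_psd hε
  have hΓsym : ∀ i j, Γ i j = Γ j i := by
    intro i j
    have := hpsdΓ.1.apply i j
    simpa using this.symm
  have hGsym : ∀ i j, (Γ i j + Eps i j) = (Γ j i + Eps j i) := by
    intro i j
    have h2 := hpsdE.1.apply i j
    rw [hΓsym i j]
    simp only [star_trivial] at h2
    rw [h2]
  have hAhG : Ah * (Γ + Eps) = Γ := by
    rw [hAhdef, Matrix.mul_assoc, ← Matrix.mul_assoc]
    exact aux_wiener_matrix hpsdΓ hpsdE hGd.1 hGd.2.2.2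
  have hAhGentry : ∀ i j, (∑ k, Ah i k * (Γ j k + Eps j k)) = Γ i j := by
    intro i j
    have h : (Ah * (Γ + Eps)) i j = Γ i j := by rw [hAhG]
    rw [Matrix.mul_apply] at h
    calc ∑ k, Ah i k * (Γ j k + Eps j k)
        = ∑ k, Ah i k * (Γ + Eps) k j := by
          refine Finset.sum_congr rfl fun k _ => ?_
          rw [Matrix.add_apply, hGsym j k]
      _ = Γ i j := h
  -- the cross term vanishes
  have cross : ∀ i, ∫ ω, (B *ᵥ Y ω) i * ((Ah *ᵥ Y ω) i - X ω i) ∂μ = 0 := by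
    intro i
    have expand : ∀ ω, (B *ᵥ Y ω) i * ((Ah *ᵥ Y ω) i - X ω i)
        = ∑ j, B i j * ((∑ k, Ah i k * (Y ω j * Y ω k)) - Y ω j * X ω i) := by
      intro ω
      simp only [Matrix.mulVec, dotProduct]
      rw [Finset.sum_mul]
      refine Finset.sum_congr rfl fun j _ => ?_
      rw [mul_sub, mul_sub, Finset.mul_sum, Finset.mul_sum]
      congr 1
      · refine Finset.sum_congr rfl fun k _ => ?_; ring
      · ring
    simp_rw [expand]
    have esum : ∫ ω, ∑ j, B i j * ((∑ k, Ah i k * (Y ω j * Y ω k)) - Y ω j * X ω i) ∂μ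
        = ∑ j, ∫ ω, B i j * ((∑ k, Ah i k * (Y ω j * Y ω k)) - Y ω j * X ω i) ∂μ :=
      integral_finset_sum _ (fun j _ =>
        (((integrable_finset_sum _ (fun k _ => (intYY j k).const_mul _)).sub
          (intYX j i)).const_mul _))
    rw [esum]
    have hval : ∀ j ∈ Finset.univ,
        ∫ ω, B i j * ((∑ k, Ah i k * (Y ω j * Y ω k)) - Y ω j * X ω i) ∂μ
          = B i j * (Γ i j - Γ j i) := by
      intro j _
      have e0 : ∫ ω, B i j * ((∑ k, Ah i k * (Y ω j * Y ω k)) - Y ω j * X ω i) ∂μ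
          = B i j * ∫ ω, ((∑ k, Ah i k * (Y ω j * Y ω k)) - Y ω j * X ω i) ∂μ :=
        integral_const_mul _ _
      have e1 : ∫ ω, ((∑ k, Ah i k * (Y ω j * Y ω k)) - Y ω j * X ω i) ∂μ
          = (∫ ω, (∑ k, Ah i k * (Y ω j * Y ω k)) ∂μ) - ∫ ω, Y ω j * X ω i ∂μ :=
        integral_sub (integrable_finset_sum _ (fun k _ => (intYY j k).const_mul _)) (intYX j i)
      have e2 : ∫ ω, (∑ k, Ah i k * (Y ω j * Y ω k)) ∂μ
          = ∑ k, ∫ ω, Ah i k * (Y ω j * Y ω k) ∂μ :=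
        integral_finset_sum _ (fun k _ => (intYY j k).const_mul _)
      have e3 : ∀ k ∈ Finset.univ,
          ∫ ω, Ah i k * (Y ω j * Y ω k) ∂μ = Ah i k * (Γ j k + Eps j k) := by
        intro k _
        have := integral_const_mul (Ah i k) (fun ω => Y ω j * Y ω k) (μ := μ)
        rw [this, hYY j k]
      rw [e0, e1, e2, Finset.sum_congr rfl e3, hAhGentry i j, hYX j i]
    rw [Finset.sum_congr rfl hval,
      Finset.sum_congr rfl (fun j _ => by rw [hΓsym i j, sub_self, mul_zero] :
        ∀ j ∈ Finset.univ, B i j * (Γ i j - Γ j i) = (0:ℝ)),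
      Finset.sum_const_zero]
  have crosstot : ∫ ω, ∑ i, (B *ᵥ Y ω) i * ((Ah *ᵥ Y ω) i - X ω i) ∂μ = 0 := by
    have esum : ∫ ω, ∑ i, (B *ᵥ Y ω) i * ((Ah *ᵥ Y ω) i - X ω i) ∂μ
        = ∑ i, ∫ ω, (B *ᵥ Y ω) i * ((Ah *ᵥ Y ω) i - X ω i) ∂μ :=
      integral_finset_sum _ (fun i _ => aux_mul_integrable (memMv B i) (memR Ah i))
    rw [esum, Finset.sum_congr rfl (fun i _ => cross i), Finset.sum_const_zero]
  -- integrability of the squared terms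
  have intsq : ∀ M : Matrix (Fin n) (Fin n) ℝ,
      Integrable (fun ω => ∑ i, ((M *ᵥ Y ω) - X ω) i ^ 2) μ := by
    intro M
    refine integrable_finset_sum _ fun i _ => ?_
    have h := aux_mul_integrable (memR M i) (memR M i)
    simpa [pow_two] using h
  have intBsq : Integrable (fun ω => ∑ i, (B *ᵥ Y ω) i ^ 2) μ := by
    refine integrable_finset_sum _ fun i _ => ?_
    have h := aux_mul_integrable (memMv B i) (memMv B i)
    simpa [pow_two] using h
  have intcross : Integrable (fun ω => ∑ i, (B *ᵥ Y ω) i * ((Ah *ᵥ Y ω) i - X ω i)) μ :=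
    integrable_finset_sum _ fun i _ => aux_mul_integrable (memMv B i) (memR Ah i)
  -- pointwise decomposition of the risk
  have pointwise : ∀ ω, (∑ i, ((A *ᵥ Y ω) - X ω) i ^ 2)
      = (∑ i, ((Ah *ᵥ Y ω) - X ω) i ^ 2)
        + ((∑ i, (B *ᵥ Y ω) i ^ 2)
          + 2 * ∑ i, (B *ᵥ Y ω) i * ((Ah *ᵥ Y ω) i - X ω i)) := by
    intro ω
    have hA : ∀ i, (A *ᵥ Y ω) i = (B *ᵥ Y ω) i + (Ah *ᵥ Y ω) i := by
      intro i
      rw [hBdef, Matrix.sub_mulVec]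
      simp
    rw [Finset.mul_sum, ← Finset.sum_add_distrib, ← Finset.sum_add_distrib]
    refine Finset.sum_congr rfl fun i _ => ?_
    simp only [Pi.sub_apply, hA i]
    ring
  have main : ∫ ω, ∑ i, ((Ah *ᵥ Y ω) - X ω) i ^ 2 ∂μ
      ≤ ∫ ω, ∑ i, ((A *ᵥ Y ω) - X ω) i ^ 2 ∂μ := by
    have hdecomp : ∫ ω, ∑ i, ((A *ᵥ Y ω) - X ω) i ^ 2 ∂μ
        = (∫ ω, ∑ i, ((Ah *ᵥ Y ω) - X ω) i ^ 2 ∂μ)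
          + ((∫ ω, ∑ i, (B *ᵥ Y ω) i ^ 2 ∂μ)
            + 2 * ∫ ω, ∑ i, (B *ᵥ Y ω) i * ((Ah *ᵥ Y ω) i - X ω i) ∂μ) := by
      simp_rw [pointwise]
      have e1 : ∫ ω, ((∑ i, ((Ah *ᵥ Y ω) - X ω) i ^ 2)
            + ((∑ i, (B *ᵥ Y ω) i ^ 2)
              + 2 * ∑ i, (B *ᵥ Y ω) i * ((Ah *ᵥ Y ω) i - X ω i))) ∂μ
          = (∫ ω, ∑ i, ((Ah *ᵥ Y ω) - X ω) i ^ 2 ∂μ)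
            + ∫ ω, ((∑ i, (B *ᵥ Y ω) i ^ 2)
              + 2 * ∑ i, (B *ᵥ Y ω) i * ((Ah *ᵥ Y ω) i - X ω i)) ∂μ :=
        integral_add (intsq Ah) (intBsq.add (intcross.const_mul 2))
      have e2 : ∫ ω, ((∑ i, (B *ᵥ Y ω) i ^ 2)
              + 2 * ∑ i, (B *ᵥ Y ω) i * ((Ah *ᵥ Y ω) i - X ω i)) ∂μ
          = (∫ ω, ∑ i, (B *ᵥ Y ω) i ^ 2 ∂μ)
            + ∫ ω, 2 * ∑ i, (B *ᵥ Y ω) i * ((Ah *ᵥ Y ω) i - X ω i) ∂μ :=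
        integral_add intBsq (intcross.const_mul 2)
      have e3 : ∫ ω, 2 * ∑ i, (B *ᵥ Y ω) i * ((Ah *ᵥ Y ω) i - X ω i) ∂μ
          = 2 * ∫ ω, ∑ i, (B *ᵥ Y ω) i * ((Ah *ᵥ Y ω) i - X ω i) ∂μ :=
        integral_const_mul _ _
      rw [e1, e2, e3]
    rw [hdecomp, crosstot, mul_zero, add_zero]
    have h2 : 0 ≤ ∫ ω, ∑ i, (B *ᵥ Y ω) i ^ 2 ∂μ :=
      integral_nonneg fun ω => Finset.sum_nonneg fun i _ => sq_nonneg _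
    linarith
  exact main
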